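/- Let γ > 0 and let u, g, λ be real numbers. Then the Kuhn–Tucker conditions (u - g ≤ 0, λ ≤ 0, λ(u - g) = 0) hold if and only if both λ = -γ[u - g - γ⁻¹λ]_+ and u - g = [u - g - γ⁻¹λ]_- hold, where [x]_+ = max(x,0) and [x]_- = min(x,0). -/
import Mathlib


theorem kuhn_tucker_iff_pos_neg_part (γ u g lam : ℝ) (hγ : 0 < γ) :
    (u - g ≤ 0 ∧ lam ≤ 0 ∧ lam * (u - g) = 0) ↔
      (lam = -γ * max (u - g - γ⁻¹ * lam) 0 ∧
       u - g = min (u - g - γ⁻¹ * lam) 0) := by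
  have hγ' : γ ≠ 0 := ne_of_gt hγ
  constructor
  · rintro ⟨h1, h2, h3⟩
    rcases mul_eq_zero.mp h3 with hl | hu
    · subst hl
      rw [mul_zero, sub_zero]
      constructor
      · rw [max_eq_right h1, mul_zero]
      · rw [min_eq_left h1]
    · have hu' : u - g = 0 := hu
      rw [hu', zero_sub]
      have hnn : (0:ℝ) ≤ -(γ⁻¹ * lam) := by
        have : 0 ≤ γ⁻¹ := le_of_lt (inv_pos.mpr hγ)
        nlinarith
      constructor
      · rw [max_eq_left hnn]
        field_simp
      · rw [min_eq_right hnn]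
  · rintro ⟨h1, h2⟩
    have hug : u - g ≤ 0 := h2.trans_le (min_le_right _ _) 
    refine ⟨hug, ?_, ?_⟩
    · rw [h1]
      have : 0 ≤ max (u - g - γ⁻¹ * lam) 0 := le_max_right _ _
      nlinarith
    · rcases le_or_gt (u - g - γ⁻¹ * lam) 0 with ht | ht
      · rw [h1, max_eq_right ht, mul_zero]; ring
      · rw [h2, min_eq_right ht.le, mul_zero]
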